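/- Let K be an alphabet space and σ: K → K⁺ a primitive generalized substitution. Then for any two letters a, b ∈ K, the languages coincide: L(σ,a) = L(σ,b). -/

import Mathlib

open Set Filter

/-- Return time function `r_A(x) = inf {n > 0 : Tⁿ x ∈ A}`. -/
noncomputable def retTime {α : Type*} (T : α → α) (A : Set α) (x : α) : ℕ :=
  sInf {n : ℕ | 0 < n ∧ T^[n] x ∈ A}

/-- The shift by `n`: `(shiftZ n x) t = x (t + n)`. -/
def shiftZ {A : Type*} (n : ℤ) (x : ℤ → A) : ℤ → A := fun t => x (t + n)

/-- The extension of a substitution to words, by concatenation. -/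
def substWord {A : Type*} (σ : A → List A) (w : List A) : List A :=
  w.foldr (fun a r => σ a ++ r) []

/-- The word `x[i..j]` read off a bi-infinite sequence. -/
def window {A : Type*} (x : ℤ → A) (i j : ℤ) : List A :=
  (List.range (j - i + 1).toNat).map fun t => x (i + t)

section Gen

variable {K : Type*} [MetricSpace K] [CompactSpace K] [TotallyDisconnectedSpace K]
  [Nontrivial K] [Inhabited K]

/-- A generalized substitution: images are nonempty words, the length function is
continuous, and each coordinate projection is continuous where defined. -/
def IsGenSubst (σ : K → List K) : Prop :=
  (∀ a, σ a ≠ []) ∧ Continuous (fun a => (σ a).length) ∧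
    ∀ j : ℕ, ContinuousOn (fun a => (σ a).getD j default) {a | j < (σ a).length}

/-- Primitivity: for every nonempty open `V ⊆ K` there is `j` such that for every
letter `a` and every `k ≥ j`, some letter of `σᵏ(a)` lies in `V`. -/
def GPrimitive (σ : K → List K) : Prop :=
  ∀ V : Set K, IsOpen V → V.Nonempty →
    ∃ j : ℕ, ∀ a : K, ∀ k : ℕ, j ≤ k → ∃ c ∈ (substWord σ)^[k] [a], c ∈ V

/-- Starting position of the `i`-th block in the concatenation `… σ(x₋₁).σ(x₀)σ(x₁) …`. -/
def blockStart (σ : K → List K) (x : ℤ → K) : ℤ → ℤ := fun i =>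
  if 0 ≤ i then (∑ t ∈ Finset.range i.toNat, ((σ (x t)).length : ℤ))
  else -(∑ t ∈ Finset.range (-i).toNat, ((σ (x (-((t : ℤ) + 1)))).length : ℤ))

/-- `E` is the extension of `σ` to bi-infinite sequences: it maps `x` to the
concatenation of the words `σ(x_i)`, with `σ(x₀)` starting at position `0`. -/
def IsSubstExt (σ : K → List K) (E : (ℤ → K) → (ℤ → K)) : Prop :=
  ∀ (x : ℤ → K) (i : ℤ) (j : ℕ), j < (σ (x i)).length →
    E x (blockStart σ x i + j) = (σ (x i)).getD j default

/-- The language generated by a letter `a`: limits of subwords of the `σᵏ(a)`. -/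
def GLang (σ : K → List K) (a : K) : Set (List K) :=
  closure {w : List K | ∃ k : ℕ, w <:+: (substWord σ)^[k] [a]}

/-- The generalized substitution subshift. -/
def GXsub (σ : K → List K) : Set (ℤ → K) :=
  {x | ∀ i j : ℤ, i ≤ j → window x i j ∈ ⋃ a : K, GLang σ a}

end Gen


open Topology
section ListTop
variable {α : Type*} [TopologicalSpace α] [Inhabited α] {X : Type*} {F : Filter X}

lemma tendsto_list_getD (j : ℕ) (l : List α) :
    Tendsto (fun l' : List α => l'.getD j default) (𝓝 l) (𝓝 (l.getD j default)) := by
  induction l generalizing j with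
  | nil => rw [nhds_nil]; exact (tendsto_pure_pure _ _).mono_right (pure_le_nhds _)
  | cons a l ih =>
    rw [List.tendsto_cons_iff]
    cases j with
    | zero => simpa using tendsto_fst
    | succ j => simpa [Function.comp_def] using (ih j).comp tendsto_snd

lemma eventually_list_length {f : X → List α} {l : List α} (hf : Tendsto f F (𝓝 l)) :
    ∀ᶠ x in F, (f x).length = l.length := by
  have h : Tendsto (fun x => (f x).length) F (𝓝 l.length) :=
    Filter.Tendsto.comp (List.continuousAt_length l) hf
  rw [nhds_discrete] at h
  exact tendsto_pure.mp h

lemma tendsto_list_of_forall {f : X → List α} {l : List α}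
    (hlen : ∀ᶠ x in F, (f x).length = l.length)
    (hcoord : ∀ j : ℕ, Tendsto (fun x => (f x).getD j default) F (𝓝 (l.getD j default))) :
    Tendsto f F (𝓝 l) := by
  induction l generalizing f with
  | nil =>
    rw [nhds_nil, tendsto_pure]
    filter_upwards [hlen] with x hx
    exact List.length_eq_zero_iff.mp hx
  | cons a l ih =>
    have hne : ∀ᶠ x in F, f x ≠ [] := by
      filter_upwards [hlen] with x hx h
      rw [h] at hx; simp at hx
    have htail : Tendsto (fun x => (f x).tail) F (𝓝 l) := by
      apply ih
      · filter_upwards [hlen] with x hx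
        simp [hx]
      · intro j
        have he : ∀ᶠ x in F, (f x).getD (j + 1) default = (f x).tail.getD j default := by
          filter_upwards [hne] with x hx
          cases h : f x with
          | nil => exact absurd h hx
          | cons b t => simp [h]
        have := hcoord (j + 1)
        simp only [List.getD_cons_succ] at this
        exact this.congr' he
    have hhead : Tendsto (fun x => (f x).getD 0 default) F (𝓝 a) := by
      simpa using hcoord 0
    refine Tendsto.congr' ?_ (hhead.cons htail)
    filter_upwards [hne] with x hx
    cases h : f x with
    | nil => exact absurd h hx
    | cons b t => simp [h]

lemma tendsto_list_append {f g : X → List α} {l₁ l₂ : List α}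
    (hf : Tendsto f F (𝓝 l₁)) (hg : Tendsto g F (𝓝 l₂)) :
    Tendsto (fun x => f x ++ g x) F (𝓝 (l₁ ++ l₂)) := by
  apply tendsto_list_of_forall
  · filter_upwards [eventually_list_length hf, eventually_list_length hg] with x h1 h2
    simp [h1, h2]
  · intro j
    by_cases hj : j < l₁.length
    · have he : ∀ᶠ x in F, (f x).getD j default = (f x ++ g x).getD j default := by
        filter_upwards [eventually_list_length hf] with x hx
        rw [List.getD_append _ _ _ _ (by omega)]
      rw [List.getD_append _ _ _ _ hj]
      exact ((tendsto_list_getD j l₁).comp hf).congr' he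
    · push_neg at hj
      have he : ∀ᶠ x in F, (g x).getD (j - l₁.length) default
          = (f x ++ g x).getD j default := by
        filter_upwards [eventually_list_length hf] with x hx
        rw [List.getD_append_right _ _ _ _ (by omega), hx]
      rw [List.getD_append_right _ _ _ _ hj]
      exact ((tendsto_list_getD (j - l₁.length) l₂).comp hg).congr' he

lemma tendsto_list_take (n : ℕ) (l : List α) :
    Tendsto (fun l' : List α => l'.take n) (𝓝 l) (𝓝 (l.take n)) := by
  induction l generalizing n with
  | nil => rw [nhds_nil]; exact (tendsto_pure_pure _ _).mono_right (pure_le_nhds _)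
  | cons a l ih =>
    rw [List.tendsto_cons_iff]
    cases n with
    | zero => simpa using tendsto_const_nhds
    | succ n =>
      simp only [List.take_succ_cons]
      exact tendsto_fst.cons ((ih n).comp tendsto_snd)

lemma tendsto_list_drop (n : ℕ) (l : List α) :
    Tendsto (fun l' : List α => l'.drop n) (𝓝 l) (𝓝 (l.drop n)) := by
  induction l generalizing n with
  | nil => rw [nhds_nil]; exact (tendsto_pure_pure _ _).mono_right (pure_le_nhds _)
  | cons a l ih =>
    rw [List.tendsto_cons_iff]
    cases n with
    | zero => simpa using tendsto_fst.cons tendsto_snd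
    | succ n =>
      simp only [List.drop_succ_cons]
      exact (ih n).comp tendsto_snd

end ListTop

section Subst
variable {K : Type*} [MetricSpace K] [CompactSpace K] [TotallyDisconnectedSpace K]
  [Nontrivial K] [Inhabited K]

lemma substWord_cons (σ : K → List K) (a : K) (w : List K) :
    substWord σ (a :: w) = σ a ++ substWord σ w := rfl

lemma substWord_append' (σ : K → List K) (u v : List K) :
    substWord σ (u ++ v) = substWord σ u ++ substWord σ v := by
  induction u with
  | nil => rfl
  | cons a u ih => simp [substWord_cons, ih]

lemma substWord_infix (σ : K → List K) {w l : List K} (h : w <:+: l) :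
    substWord σ w <:+: substWord σ l := by
  obtain ⟨s, t, rfl⟩ := h
  exact ⟨substWord σ s, substWord σ t, by simp [substWord_append']⟩

lemma substWord_iterate_infix (σ : K → List K) (k : ℕ) {w l : List K} (h : w <:+: l) :
    (substWord σ)^[k] w <:+: (substWord σ)^[k] l := by
  induction k generalizing w l with
  | zero => simpa using h
  | succ k ih =>
    simp only [Function.iterate_succ_apply]
    exact ih (substWord_infix σ h)

lemma gensubst_continuous {σ : K → List K} (hσ : IsGenSubst σ) : Continuous σ := by
  rw [continuous_iff_continuousAt]
  intro a
  have hlen : ∀ᶠ x in 𝓝 a, (σ x).length = (σ a).length := by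
    have : IsOpen {x : K | (σ x).length = (σ a).length} :=
      (isOpen_discrete {n : ℕ | n = (σ a).length}).preimage hσ.2.1
    exact this.mem_nhds rfl
  apply tendsto_list_of_forall hlen
  intro j
  by_cases hj : j < (σ a).length
  · have hopen : IsOpen {x : K | j < (σ x).length} :=
      (isOpen_discrete {n : ℕ | j < n}).preimage hσ.2.1
    exact (hσ.2.2 j).continuousAt (hopen.mem_nhds hj)
  · push_neg at hj
    rw [List.getD_eq_default _ _ hj]
    have he : ∀ᶠ x in 𝓝 a, default = (σ x).getD j default := by
      filter_upwards [hlen] with x hx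
      rw [List.getD_eq_default _ _ (by omega)]
    exact tendsto_const_nhds.congr' he

lemma tendsto_substWord {σ : K → List K} (hσc : Continuous σ) (l : List K) :
    Tendsto (substWord σ) (𝓝 l) (𝓝 (substWord σ l)) := by
  induction l with
  | nil => rw [nhds_nil]; exact (tendsto_pure_pure _ _).mono_right (pure_le_nhds _)
  | cons a l ih =>
    rw [List.tendsto_cons_iff]
    show Tendsto (fun p : K × List K => σ p.1 ++ substWord σ p.2) _
      (𝓝 (σ a ++ substWord σ l))
    exact tendsto_list_append ((hσc.tendsto a).comp tendsto_fst) (ih.comp tendsto_snd)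

lemma continuous_iterWord {σ : K → List K} (hσc : Continuous σ) (k : ℕ) :
    Continuous fun a : K => (substWord σ)^[k] [a] := by
  induction k with
  | zero =>
    simp only [Function.iterate_zero, id]
    exact continuous_iff_continuousAt.mpr fun a => tendsto_id.cons tendsto_const_nhds
  | succ k ih =>
    simp only [Function.iterate_succ_apply']
    exact continuous_iff_continuousAt.mpr fun a =>
      (tendsto_substWord hσc _).comp (ih.tendsto a)

end Subst


theorem stmt17 {K : Type*} [MetricSpace K] [CompactSpace K]
    [TotallyDisconnectedSpace K] [Nontrivial K] [Inhabited K]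
    (σ : K → List K) (hσ : IsGenSubst σ) (hprim : GPrimitive σ) :
    ∀ a b : K, GLang σ a = GLang σ b := by

  have hσc : Continuous σ := gensubst_continuous hσ
  have key : ∀ a b : K, GLang σ a ⊆ GLang σ b := by
    intro a b
    apply closure_minimal _ isClosed_closure
    rintro w ⟨k, u, v, huv⟩
    rw [mem_closure_iff_nhds]
    intro N hN
    set Φ : K → List K :=
      fun c => (((substWord σ)^[k] [c]).drop u.length).take w.length with hΦ
    have hΦcont : Continuous Φ := by
      rw [continuous_iff_continuousAt]
      intro c
      exact (tendsto_list_take _ _).comp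
        ((tendsto_list_drop _ _).comp ((continuous_iterWord hσc k).tendsto c))
    have hΦa : Φ a = w := by
      rw [hΦ]
      simp only
      rw [← huv, List.append_assoc, List.drop_left, List.take_left]
    have hV : Φ ⁻¹' N ∈ 𝓝 a := hΦcont.continuousAt (by rw [hΦa]; exact hN)
    obtain ⟨V, hVsub, hVopen, haV⟩ := mem_nhds_iff.mp hV
    obtain ⟨j, hj⟩ := hprim V hVopen ⟨a, haV⟩
    obtain ⟨c, hcmem, hcV⟩ := hj b j le_rfl
    refine ⟨Φ c, hVsub hcV, ?_⟩
    refine ⟨k + j, ?_⟩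
    have h1 : Φ c <:+: (substWord σ)^[k] [c] :=
      (List.take_prefix w.length _).isInfix.trans
        (List.drop_suffix u.length ((substWord σ)^[k] [c])).isInfix
    have h2 : [c] <:+: (substWord σ)^[j] [b] := by
      obtain ⟨s, t, hst⟩ := List.append_of_mem hcmem
      exact ⟨s, t, by rw [hst]; simp⟩
    have h3 : (substWord σ)^[k] [c] <:+: (substWord σ)^[k + j] [b] := by
      rw [Function.iterate_add_apply]
      exact substWord_iterate_infix σ k h2
    exact h1.trans h3
  intro a b
  exact (key a b).antisymm (key b a)
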